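/- For every real a ≠ 0, the inequality 2√(a²(a² + 3)) + 4√(a⁴ + 3a² + 2) > 2√3 · √(a⁴ + 4a² + 2) holds. -/
import Mathlib

theorem stmt4 (a : ℝ) (ha : a ≠ 0) :
    2 * Real.sqrt (a ^ 2 * (a ^ 2 + 3)) + 4 * Real.sqrt (a ^ 4 + 3 * a ^ 2 + 2) >
      2 * Real.sqrt 3 * Real.sqrt (a ^ 4 + 4 * a ^ 2 + 2) := by
  have h1 : (0:ℝ) ≤ 2 * Real.sqrt (a ^ 2 * (a ^ 2 + 3)) := by positivity
  have key : 2 * Real.sqrt 3 * Real.sqrt (a ^ 4 + 4 * a ^ 2 + 2)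
      < 4 * Real.sqrt (a ^ 4 + 3 * a ^ 2 + 2) := by
    have h2 : Real.sqrt 3 * Real.sqrt (a ^ 4 + 4 * a ^ 2 + 2)
        = Real.sqrt (3 * (a ^ 4 + 4 * a ^ 2 + 2)) := by
      rw [Real.sqrt_mul] <;> norm_num
    have h3 : (4:ℝ) * Real.sqrt (a ^ 4 + 3 * a ^ 2 + 2)
        = 2 * Real.sqrt (4 * (a ^ 4 + 3 * a ^ 2 + 2)) := by
      rw [Real.sqrt_mul (by norm_num)]
      rw [show Real.sqrt 4 = 2 by
        rw [show (4:ℝ) = 2^2 by norm_num, Real.sqrt_sq (by norm_num)]]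
      ring
    rw [h3, mul_assoc, h2]
    have : Real.sqrt (3 * (a ^ 4 + 4 * a ^ 2 + 2)) < Real.sqrt (4 * (a ^ 4 + 3 * a ^ 2 + 2)) := by
      apply Real.sqrt_lt_sqrt (by positivity)
      nlinarith [sq_nonneg (a ^ 2)]
    linarith
  linarith
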